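/- For every graph G of maximum degree at most Δ, there exists a Δ-regular graph H containing G as an induced subgraph such that any two vertices of H lying in different copies of G (in the doubling construction) have at most 2 common neighbours, and such that if H admits a p-peaceful proper c-colouring then so does G. -/

import Mathlib

open Function

set_option linter.unusedSectionVars false

section Aux

variable {V : Type} [Fintype V]

private def ffs (Δ : ℕ) : Fin Δ → Bool := fun _ => false

private def flp {Δ : ℕ} (s : Fin Δ → Bool) (i : Fin Δ) : Fin Δ → Bool :=
  Function.update s i (!s i)

private lemma flp_apply_self {Δ} (s : Fin Δ → Bool) (i) : flp s i i = !s i := by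
  simp [flp]

private lemma flp_apply_ne {Δ} (s : Fin Δ → Bool) {i j : Fin Δ} (h : j ≠ i) :
    flp s i j = s j := by
  simp [flp, Function.update_of_ne h]

private lemma flp_flp {Δ} (s : Fin Δ → Bool) (i) : flp (flp s i) i = s := by
  funext j
  by_cases hj : j = i
  · subst hj; simp [flp]
  · rw [flp_apply_ne _ hj, flp_apply_ne _ hj]

private lemma flp_ne {Δ} (s : Fin Δ → Bool) (i) : flp s i ≠ s := by
  intro h
  have := congrFun h i
  rw [flp_apply_self] at this
  simp at this

private lemma flp_cancel {Δ} {s t : Fin Δ → Bool} {i} (h : flp s i = flp t i) : s = t := by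
  have := congrArg (fun r => flp r i) h
  simpa [flp_flp] using this

private lemma flp_eq_flp_ne {Δ} {s t : Fin Δ → Bool} {i j : Fin Δ} (hij : i ≠ j)
    (h : flp s i = flp t j) :
    t i = !s i ∧ t j = !s j ∧ ∀ k, k ≠ i → k ≠ j → t k = s k := by
  refine ⟨?_, ?_, ?_⟩
  · have := congrFun h i
    rw [flp_apply_self, flp_apply_ne _ hij] at this
    exact this.symm
  · have := congrFun h j
    rw [flp_apply_ne _ (Ne.symm hij), flp_apply_self] at this
    cases hsj : s j <;> cases htj : t j <;> simp [hsj, htj] at this ⊢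
  · intro k hki hkj
    have := congrFun h k
    rw [flp_apply_ne _ hki, flp_apply_ne _ hkj] at this
    exact this.symm

private lemma flp_right_inj {Δ} {s : Fin Δ → Bool} {i j : Fin Δ}
    (h : flp s i = flp s j) : i = j := by
  by_contra hij
  have := (flp_eq_flp_ne hij h).1
  simp at this

/-- The doubled graph. -/
private def DG (G : SimpleGraph V) (Δ : ℕ) : SimpleGraph (V × (Fin Δ → Bool)) where
  Adj a b := (a.2 = b.2 ∧ G.Adj a.1 b.1) ∨
    (a.1 = b.1 ∧ ∃ i : Fin Δ, (G.neighborSet a.1).ncard + i.1 < Δ ∧ b.2 = flp a.2 i)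
  symm := by
    constructor
    rintro a b (⟨h1, h2⟩ | ⟨h1, i, hi, h2⟩)
    · exact Or.inl ⟨h1.symm, h2.symm⟩
    · refine Or.inr ⟨h1.symm, i, by rwa [← h1], ?_⟩
      rw [h2, flp_flp]
  loopless := by
    constructor
    rintro a (⟨-, h⟩ | ⟨-, i, -, h2⟩)
    · exact G.loopless.irrefl _ h
    · exact flp_ne _ _ h2.symm

private lemma DG_adj {G : SimpleGraph V} {Δ : ℕ} {a b : V × (Fin Δ → Bool)} :
    (DG G Δ).Adj a b ↔ ((a.2 = b.2 ∧ G.Adj a.1 b.1) ∨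
      (a.1 = b.1 ∧ ∃ i : Fin Δ, (G.neighborSet a.1).ncard + i.1 < Δ ∧ b.2 = flp a.2 i)) :=
  Iff.rfl

private lemma DG_slice_adj {G : SimpleGraph V} {Δ : ℕ} {u v : V} {s : Fin Δ → Bool} :
    (DG G Δ).Adj (u, s) (v, s) ↔ G.Adj u v := by
  rw [DG_adj]
  constructor
  · rintro (⟨-, h⟩ | ⟨-, i, -, h2⟩)
    · exact h
    · exact absurd h2.symm (flp_ne _ _)
  · exact fun h => Or.inl ⟨rfl, h⟩

private lemma DG_neighborSet (G : SimpleGraph V) (Δ : ℕ) (a : V) (s : Fin Δ → Bool) :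
    (DG G Δ).neighborSet (a, s) =
      (fun u => (u, s)) '' (G.neighborSet a) ∪
      (fun i => (a, flp s i)) '' {i : Fin Δ | (G.neighborSet a).ncard + i.1 < Δ} := by
  ext ⟨b, t⟩
  simp only [SimpleGraph.mem_neighborSet, DG_adj, Set.mem_union, Set.mem_image,
    Set.mem_setOf_eq]
  constructor
  · rintro (⟨h1, h2⟩ | ⟨h1, i, hi, h2⟩)
    · exact Or.inl ⟨b, h2, by rw [h1]⟩
    · exact Or.inr ⟨i, hi, by rw [h1, h2]⟩
  · rintro (⟨u, hu, h⟩ | ⟨i, hi, h⟩)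
    · obtain ⟨rfl, rfl⟩ : u = b ∧ s = t := by simpa [Prod.ext_iff] using h
      exact Or.inl ⟨rfl, hu⟩
    · obtain ⟨rfl, rfl⟩ : a = b ∧ flp s i = t := by simpa [Prod.ext_iff] using h
      exact Or.inr ⟨rfl, i, hi, rfl⟩

private lemma ncard_fin_lt {Δ k : ℕ} (h : k ≤ Δ) : {i : Fin Δ | i.1 < k}.ncard = k := by
  have hE : {i : Fin Δ | i.1 < k} = Set.range (Fin.castLE h) := by
    ext i
    constructor
    · intro hi; exact ⟨⟨i.1, hi⟩, rfl⟩
    · rintro ⟨j, rfl⟩; exact j.2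
  rw [hE, ← Nat.card_coe_set_eq, Nat.card_range_of_injective (Fin.castLE_injective h)]
  simp

private lemma DG_degree (G : SimpleGraph V) (Δ : ℕ)
    (hdeg : ∀ v, (G.neighborSet v).ncard ≤ Δ) (a : V) (s : Fin Δ → Bool) :
    ((DG G Δ).neighborSet (a, s)).ncard = Δ := by
  rw [DG_neighborSet]
  have hdisj : Disjoint ((fun u => (u, s)) '' (G.neighborSet a))
      ((fun i => (a, flp s i)) '' {i : Fin Δ | (G.neighborSet a).ncard + i.1 < Δ}) := by
    rw [Set.disjoint_left]
    rintro x ⟨u, -, rfl⟩ ⟨i, -, hpair⟩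
    exact flp_ne s i (Prod.ext_iff.mp hpair).2
  rw [Set.ncard_union_eq hdisj (Set.toFinite _) (Set.toFinite _)]
  have inj1 : Function.Injective (fun u : V => (u, s)) := fun x y h =>
    (Prod.ext_iff.mp h).1
  have inj2 : Function.Injective (fun i : Fin Δ => (a, flp s i)) := fun x y h =>
    flp_right_inj (Prod.ext_iff.mp h).2
  rw [Set.ncard_image_of_injective _ inj1, Set.ncard_image_of_injective _ inj2]
  have hk : {i : Fin Δ | (G.neighborSet a).ncard + i.1 < Δ} =
      {i : Fin Δ | i.1 < Δ - (G.neighborSet a).ncard} := by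
    ext i; simp only [Set.mem_setOf_eq]; omega
  rw [hk, ncard_fin_lt (Nat.sub_le _ _)]
  have := hdeg a
  omega

private noncomputable def code (Δ : ℕ) (s : Fin Δ → Bool) : ℕ :=
  if s = ffs Δ then 0 else (Fintype.equivFin (Fin Δ → Bool) s).1 + 1

private lemma code_inj {Δ : ℕ} : Function.Injective (code Δ) := by
  intro s t h
  unfold code at h
  by_cases h1 : s = ffs Δ <;> by_cases h2 : t = ffs Δ
  · rw [h1, h2]
  · rw [if_pos h1, if_neg h2] at h; simp at h
  · rw [if_neg h1, if_pos h2] at h; simp at h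
  · rw [if_neg h1, if_neg h2] at h
    exact (Fintype.equivFin _).injective (Fin.val_injective (Nat.succ_injective h))

private lemma code_eq_zero {Δ : ℕ} {s : Fin Δ → Bool} : code Δ s = 0 ↔ s = ffs Δ := by
  unfold code
  split_ifs with h1 <;> simp [h1]

private lemma DG_common (G : SimpleGraph V) (Δ : ℕ) {a b : V} {s t : Fin Δ → Bool}
    (h : s ≠ t) :
    ((DG G Δ).neighborSet (a, s) ∩ (DG G Δ).neighborSet (b, t)).ncard ≤ 2 := by
  set S := (DG G Δ).neighborSet (a, s) ∩ (DG G Δ).neighborSet (b, t) with hS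
  have pair_le : ∀ p q : V × (Fin Δ → Bool), S ⊆ {p, q} → S.ncard ≤ 2 := by
    intro p q hsub
    calc S.ncard ≤ ({p, q} : Set _).ncard := Set.ncard_le_ncard hsub (Set.toFinite _)
    _ ≤ 2 := by
        refine (Set.ncard_insert_le _ _).trans ?_
        simp
  by_cases hC : ∃ j, t = flp s j
  · obtain ⟨j₀, hj₀⟩ := hC
    refine pair_le (b, s) (a, t) ?_
    rintro ⟨c, r⟩ ⟨hu, hv⟩
    rw [SimpleGraph.mem_neighborSet, DG_adj] at hu hv
    simp only [Set.mem_insert_iff, Set.mem_singleton_iff, Prod.mk.injEq]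
    simp only at hu hv
    rcases hu with ⟨hu1, hu2⟩ | ⟨hu1, i, -, hu2⟩ <;>
      rcases hv with ⟨hv1, hv2⟩ | ⟨hv1, j, -, hv2⟩
    · exact absurd (hu1.trans hv1.symm) h
    · exact Or.inl ⟨hv1.symm, hu1.symm⟩
    · exact Or.inr ⟨hu1.symm, hv1.symm⟩
    · exfalso
      have hmix : flp s i = flp t j := hu2.symm.trans hv2
      by_cases hij : i = j
      · subst hij
        exact h (flp_cancel hmix)
      · obtain ⟨e1, e2, -⟩ := flp_eq_flp_ne hij hmix
        have hi : i = j₀ := by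
          by_contra hne
          rw [hj₀, flp_apply_ne _ hne] at e1
          simp at e1
        have hj : j = j₀ := by
          by_contra hne
          rw [hj₀, flp_apply_ne _ hne] at e2
          simp at e2
        exact hij (hi.trans hj.symm)
  · have hBB : ∀ c r, (DG G Δ).Adj (a, s) (c, r) → (DG G Δ).Adj (b, t) (c, r) →
        c = a ∧ ∃ i j : Fin Δ, i ≠ j ∧ r = flp s i ∧ r = flp t j := by
      intro c r hu hv
      rw [DG_adj] at hu hv
      simp only at hu hv
      rcases hu with ⟨hu1, hu2⟩ | ⟨hu1, i, -, hu2⟩ <;>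
        rcases hv with ⟨hv1, hv2⟩ | ⟨hv1, j, -, hv2⟩
      · exact absurd (hu1.trans hv1.symm) h
      · exfalso
        apply hC
        refine ⟨j, ?_⟩
        rw [hu1.trans hv2, flp_flp]
      · exact absurd ⟨i, hv1.trans hu2⟩ hC
      · refine ⟨hu1.symm, i, j, ?_, hu2, hv2⟩
        intro hij
        subst hij
        exact h (flp_cancel (hu2.symm.trans hv2))
    rcases Set.eq_empty_or_nonempty S with hE | ⟨⟨c₀, r₀⟩, hx₀⟩
    · rw [hE]; simp
    · obtain ⟨hu₀, hv₀⟩ := hx₀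
      rw [SimpleGraph.mem_neighborSet] at hu₀ hv₀
      obtain ⟨-, i₀, j₀, hij₀, hr₀s, hr₀t⟩ := hBB c₀ r₀ hu₀ hv₀
      have hkey := flp_eq_flp_ne hij₀ (hr₀s.symm.trans hr₀t)
      refine pair_le (a, flp s i₀) (a, flp s j₀) ?_
      rintro ⟨c, r⟩ ⟨hu, hv⟩
      rw [SimpleGraph.mem_neighborSet] at hu hv
      obtain ⟨hca, i, j, hij, hrs, hrt⟩ := hBB c r hu hv
      have hti : t i = !s i := (flp_eq_flp_ne hij (hrs.symm.trans hrt)).1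
      have hi_mem : i = i₀ ∨ i = j₀ := by
        by_contra hcon
        push_neg at hcon
        have := hkey.2.2 i hcon.1 hcon.2
        rw [hti] at this
        simp at this
      simp only [Set.mem_insert_iff, Set.mem_singleton_iff, Prod.mk.injEq]
      rcases hi_mem with rfl | rfl
      · exact Or.inl ⟨hca, hrs⟩
      · exact Or.inr ⟨hca, hrs⟩

end Aux


/-- Every graph of maximum degree at most `Δ` embeds as an induced subgraph in
a `Δ`-regular graph `H` built from copies of `G`, where vertices in different
copies have at most 2 common neighbours, and any `p`-peaceful proper
`c`-colouring of `H` yields one of `G`. -/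
theorem stmt13 (V : Type) [Fintype V] (G : SimpleGraph V) (Δ : ℕ)
    (hdeg : ∀ v, (G.neighborSet v).ncard ≤ Δ) :
    ∃ (W : Type) (_ : Fintype W) (H : SimpleGraph W) (ι : G ↪g H) (copy : W → ℕ),
      (∀ w : W, (H.neighborSet w).ncard = Δ) ∧
      Set.range ι = copy ⁻¹' {0} ∧
      (∀ i : ℕ, (copy ⁻¹' {i}).Nonempty →
        Nonempty ((H.induce (copy ⁻¹' {i})) ≃g G)) ∧
      (∀ u v : W, copy u ≠ copy v →
        (H.neighborSet u ∩ H.neighborSet v).ncard ≤ 2) ∧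
      (∀ (c : ℕ) (p : ℝ) (f : W → Fin c),
        (∀ u v, H.Adj u v → f u ≠ f v) →
        (∀ w : W, ({x ∈ H.neighborSet w |
            ∃ u ∈ H.neighborSet w, u ≠ x ∧ f u = f x}.ncard : ℝ) ≤ p) →
        ∃ g : V → Fin c, (∀ u v, G.Adj u v → g u ≠ g v) ∧
          ∀ v : V, ({x ∈ G.neighborSet v |
            ∃ u ∈ G.neighborSet v, u ≠ x ∧ g u = g x}.ncard : ℝ) ≤ p) := by
  classical
  refine ⟨V × (Fin Δ → Bool), inferInstance, DG G Δ,
    ⟨⟨fun v => (v, ffs Δ), fun x y h => (Prod.ext_iff.mp h).1⟩,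
      fun {x y} => DG_slice_adj⟩,
    fun w => code Δ w.2, ?_, ?_, ?_, ?_, ?_⟩
  · rintro ⟨a, s⟩
    exact DG_degree G Δ hdeg a s
  · ext ⟨a, s⟩
    simp only [Set.mem_range, Set.mem_preimage, Set.mem_singleton_iff]
    constructor
    · rintro ⟨v, hv⟩
      obtain ⟨rfl, rfl⟩ : v = a ∧ ffs Δ = s := by
        exact Prod.ext_iff.mp hv
      exact code_eq_zero.mpr rfl
    · intro hz
      exact ⟨a, by rw [code_eq_zero.mp hz]; rfl⟩
  · rintro i ⟨⟨v₀, s₀⟩, h₀⟩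
    simp only [Set.mem_preimage, Set.mem_singleton_iff] at h₀
    have hmem : ∀ w : V × (Fin Δ → Bool),
        w ∈ (fun w : V × (Fin Δ → Bool) => code Δ w.2) ⁻¹' {i} ↔ w.2 = s₀ := by
      intro w
      simp only [Set.mem_preimage, Set.mem_singleton_iff]
      constructor
      · intro hw; exact code_inj (hw.trans h₀.symm)
      · intro hw; rw [hw, h₀]
    refine ⟨⟨⟨fun x => x.1.1, fun v => ⟨(v, s₀), (hmem _).mpr rfl⟩, ?_, ?_⟩, ?_⟩⟩
    · rintro ⟨⟨v, s⟩, hx⟩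
      have : s = s₀ := (hmem _).mp hx
      subst this
      rfl
    · intro v
      rfl
    · rintro ⟨⟨x, sx⟩, hx⟩ ⟨⟨y, sy⟩, hy⟩
      have hx' : sx = s₀ := (hmem _).mp hx
      have hy' : sy = s₀ := (hmem _).mp hy
      subst hx'; subst hy'
      simp only [SimpleGraph.comap_adj, Function.Embedding.coe_subtype]
      exact DG_slice_adj.symm
  · rintro ⟨a, s⟩ ⟨b, t⟩ hne
    have hst : s ≠ t := fun hst => hne (by simp [hst])
    exact DG_common G Δ hst
  · intro c p f hproper hpeace
    refine ⟨fun v => f (v, ffs Δ), ?_, ?_⟩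
    · intro u v huv
      exact hproper _ _ (DG_slice_adj.mpr huv)
    · intro v
      refine le_trans ?_ (hpeace (v, ffs Δ))
      rw [Nat.cast_le]
      have himg : (fun x : V => (x, ffs Δ)) ''
          {x ∈ G.neighborSet v | ∃ u ∈ G.neighborSet v, u ≠ x ∧
            f (u, ffs Δ) = f (x, ffs Δ)} ⊆
          {x ∈ (DG G Δ).neighborSet (v, ffs Δ) |
            ∃ u ∈ (DG G Δ).neighborSet (v, ffs Δ), u ≠ x ∧ f u = f x} := by
        rintro - ⟨x, ⟨hx, u, hu, hux, hfeq⟩, rfl⟩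
        refine ⟨DG_slice_adj.mpr hx, (u, ffs Δ), DG_slice_adj.mpr hu, ?_, hfeq⟩
        intro hcon
        exact hux (Prod.ext_iff.mp hcon).1
      have hinj : Function.Injective (fun x : V => (x, ffs Δ)) :=
        fun x y h => (Prod.ext_iff.mp h).1
      calc {x ∈ G.neighborSet v | ∃ u ∈ G.neighborSet v, u ≠ x ∧
              f (u, ffs Δ) = f (x, ffs Δ)}.ncard
          = ((fun x : V => (x, ffs Δ)) ''
              {x ∈ G.neighborSet v | ∃ u ∈ G.neighborSet v, u ≠ x ∧
                f (u, ffs Δ) = f (x, ffs Δ)}).ncard :=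
            (Set.ncard_image_of_injective _ hinj).symm
        _ ≤ _ := Set.ncard_le_ncard himg (Set.toFinite _)
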